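/- arXiv:2305.00687 — 7 statements merged into one kernel-verified Lean document; each statement's English description precedes it below -/
import Mathlib

section
/- For every natural number n ≥ 1, max{ψ(a_n), ψ(a_n+1)} ≤ √(n+1), where a_n = ⌊(n+1)/2 − √(n+1)/2⌋ and ψ(t) = (2√n/(n+1))·√(t(n+1−t)) + |1 − 2t/(n+1)|. -/
noncomputable def psi (n : ℕ) (t : ℝ) : ℝ :=
  (2 * Real.sqrt n / (n + 1)) * Real.sqrt (t * (n + 1 - t)) + |1 - 2 * t / (n + 1)|

noncomputable def a (n : ℕ) : ℤ := ⌊(n + 1 : ℝ) / 2 - Real.sqrt (n + 1) / 2⌋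

lemma psi_le_sqrt (n : ℕ) (t : ℝ) (ht0 : 0 ≤ t) (ht1 : t ≤ (n : ℝ) + 1) :
    psi n t ≤ Real.sqrt ((n : ℝ) + 1) := by
  have hN : (0:ℝ) < (n:ℝ) + 1 := by positivity
  set N : ℝ := (n:ℝ) + 1 with hNdef
  set X : ℝ := Real.sqrt (t * (N - t)) with hX
  set w : ℝ := |N - 2 * t| with hw
  have hu2 : X ^ 2 = t * (N - t) := Real.sq_sqrt (by nlinarith)
  have hsn : Real.sqrt (n:ℝ) ^ 2 = (n:ℝ) := Real.sq_sqrt (Nat.cast_nonneg n)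
  have hw2 : w ^ 2 = (N - 2 * t) ^ 2 := sq_abs _
  have hX0 : 0 ≤ X := Real.sqrt_nonneg _
  have hw0 : 0 ≤ w := abs_nonneg _
  have hs0 : 0 ≤ Real.sqrt (n:ℝ) := Real.sqrt_nonneg _
  have hpos : 0 ≤ psi n t := by unfold psi; positivity
  rw [← Real.sqrt_sq hpos]
  apply Real.sqrt_le_sqrt
  have hrw : |1 - 2 * t / N| = w / N := by
    have : 1 - 2 * t / N = (N - 2 * t) / N := by field_simp
    rw [this, abs_div, abs_of_pos hN]
  have hkey : (2 * Real.sqrt (n:ℝ) * X + w) ^ 2 ≤ N ^ 3 := by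
    nlinarith [sq_nonneg (2 * X - Real.sqrt (n:ℝ) * w), hu2, hsn, hw2,
      mul_nonneg (mul_nonneg hs0 hX0) hw0]
  have : psi n t ^ 2 = (2 * Real.sqrt (n:ℝ) * X + w) ^ 2 / N ^ 2 := by
    unfold psi
    rw [← hNdef, ← hX, hrw, div_mul_eq_mul_div, ← add_div, div_pow]
  rw [this, div_le_iff₀ (by positivity)]
  nlinarith [hkey]

theorem stmt2 (n : ℕ) (hn : 1 ≤ n) :
    max (psi n (a n)) (psi n (a n + 1)) ≤ Real.sqrt (n + 1) := by
  have hN : (2:ℝ) ≤ (n:ℝ) + 1 := by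
    have : (1:ℝ) ≤ (n:ℝ) := by exact_mod_cast hn
    linarith
  have hs1 : (1:ℝ) ≤ Real.sqrt ((n:ℝ) + 1) := by
    have h := Real.sqrt_le_sqrt (show (1:ℝ) ≤ (n:ℝ) + 1 by linarith)
    rwa [Real.sqrt_one] at h
  have hsle : Real.sqrt ((n:ℝ) + 1) ≤ (n:ℝ) + 1 := by
    have h := Real.sqrt_le_sqrt (show (n:ℝ) + 1 ≤ ((n:ℝ) + 1) ^ 2 by nlinarith)
    rwa [Real.sqrt_sq (by linarith)] at h
  have hfl : (a n : ℝ) ≤ ((n:ℝ) + 1) / 2 - Real.sqrt ((n:ℝ) + 1) / 2 := by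
    have := Int.floor_le ((n + 1 : ℝ) / 2 - Real.sqrt (n + 1) / 2)
    simpa [a] using this
  have hfl0 : (0:ℤ) ≤ a n := by
    apply Int.le_floor.mpr
    push_cast
    linarith
  have ha0 : (0:ℝ) ≤ (a n : ℝ) := by exact_mod_cast hfl0
  have ha1 : (a n : ℝ) + 1 ≤ (n:ℝ) + 1 := by linarith
  apply max_le
  · exact psi_le_sqrt n _ ha0 (by linarith)
  · exact psi_le_sqrt n _ (by linarith) ha1
end

section
/- For every natural number n ≥ 1, max{ψ(a_n), ψ(a_n+1)} ≥ √n, where a_n = ⌊(n+1)/2 − √(n+1)/2⌋ and ψ(t) = (2√n/(n+1))·√(t(n+1−t)) + |1 − 2t/(n+1)|. -/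
lemma aux_key (s x w : ℝ) (hs : 1 ≤ s) (hx0 : 0 ≤ x) (hsx : s * x ≤ 1)
    (hw0 : 0 ≤ w) (hw2 : w ^ 2 = 1 - x ^ 2) : s ≤ s * w + x := by
  have hw1 : w ≤ 1 := by nlinarith
  nlinarith [mul_nonneg (mul_nonneg (le_trans zero_le_one hs) hw0) (sub_nonneg.2 hw1)]

theorem stmt3 (n : ℕ) (hn : 1 ≤ n) :
    Real.sqrt n ≤ max (psi n (a n)) (psi n (a n + 1)) := by
  set s := Real.sqrt n with hs
  have hs1 : 1 ≤ s := by
    rw [hs, show (1:ℝ) = Real.sqrt 1 by simp]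
    exact Real.sqrt_le_sqrt (by exact_mod_cast hn)
  have hs2 : s ^ 2 = n := Real.sq_sqrt (by positivity)
  set N : ℝ := (n : ℝ) + 1 with hN
  have hN0 : (0:ℝ) < N := by positivity
  have hsN : s ≤ Real.sqrt N := Real.sqrt_le_sqrt (by rw [hN]; linarith)
  have hrN2 : Real.sqrt N ^ 2 = N := Real.sq_sqrt hN0.le
  have hrN0 : 0 ≤ Real.sqrt N := Real.sqrt_nonneg _
  set t : ℝ := (a n : ℝ) + 1 with ht
  have hfl1 : (a n : ℝ) ≤ N / 2 - Real.sqrt N / 2 := Int.floor_le _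
  have hfl2 : N / 2 - Real.sqrt N / 2 < (a n : ℝ) + 1 := Int.lt_floor_add_one _
  set u : ℝ := 1 - 2 * t / N with hu
  -- bound s * |u| ≤ 1
  have huN : u * N = N - 2 * t := by rw [hu]; field_simp
  have hub : u < Real.sqrt N / N := by
    rw [lt_div_iff₀ hN0, huN, ht]; linarith
  have hlb : Real.sqrt N / N - 2 / N ≤ u := by
    rw [div_sub_div_same, div_le_iff₀ hN0, huN, ht]; linarith
  have key : s * |u| ≤ 1 := by
    rcases le_or_gt 0 u with h | h
    · rw [abs_of_nonneg h]
      have : s * u ≤ Real.sqrt N * (Real.sqrt N / N) := by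
        apply mul_le_mul hsN hub.le h hrN0
      calc s * u ≤ Real.sqrt N * (Real.sqrt N / N) := this
        _ = 1 := by
          rw [← mul_div_assoc, Real.mul_self_sqrt hN0.le, div_self hN0.ne']
    · rw [abs_of_neg h]
      have h2 : -u ≤ 2 / N := by
        have : 0 ≤ Real.sqrt N / N := by positivity
        linarith
      have : s * (-u) ≤ s * (2 / N) :=
        mul_le_mul_of_nonneg_left h2 (by linarith)
      have h3 : s * (2 / N) ≤ 1 := by
        rw [← mul_div_assoc, div_le_one hN0]
        nlinarith [sq_nonneg (s - 1)]
      exact this.trans h3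
  have hx0 : (0:ℝ) ≤ |u| := abs_nonneg _
  have hx1 : |u| ≤ 1 := by nlinarith
  -- rewrite psi
  have hfac : t * (N - t) = (N / 2) ^ 2 * (1 - u ^ 2) := by
    rw [hu]; field_simp; ring
  have hsqrt : Real.sqrt (t * (N - t)) = (N / 2) * Real.sqrt (1 - u ^ 2) := by
    rw [hfac, Real.sqrt_mul (by positivity), Real.sqrt_sq (by positivity)]
  have hpsi : psi n t = s * Real.sqrt (1 - u ^ 2) + |u| := by
    rw [psi, ← hN, ← hs, ← hu, hsqrt]
    field_simp
  have hw2 : Real.sqrt (1 - u ^ 2) ^ 2 = 1 - |u| ^ 2 := by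
    rw [Real.sq_sqrt (by nlinarith [abs_nonneg u, sq_abs u] : (0:ℝ) ≤ 1 - u ^ 2), sq_abs]
  have := aux_key s |u| (Real.sqrt (1 - u ^ 2)) hs1 hx0 key (Real.sqrt_nonneg _) hw2
  have hfin : s ≤ psi n t := by rw [hpsi]; exact this
  calc s ≤ psi n t := hfin
    _ ≤ max (psi n (a n)) (psi n (a n + 1)) := by rw [ht]; exact le_max_right _ _
end

section
/- For a natural number n ≥ 1, max{ψ(a_n), ψ(a_n+1)} = √(n+1) if and only if √(n+1) is an integer, where a_n = ⌊(n+1)/2 − √(n+1)/2⌋ and ψ(t) = (2√n/(n+1))·√(t(n+1−t)) + |1 − 2t/(n+1)|. -/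
private lemma sq_inj' {x y : ℝ} (hx : 0 ≤ x) (hy : 0 ≤ y) (h : x ^ 2 = y ^ 2) : x = y := by
  calc x = Real.sqrt (x ^ 2) := (Real.sqrt_sq hx).symm
    _ = Real.sqrt (y ^ 2) := by rw [h]
    _ = y := Real.sqrt_sq hy

private lemma psi_eq (n : ℕ) (t : ℝ) :
    psi n t = (2 * Real.sqrt n * Real.sqrt (t * ((n : ℝ) + 1 - t)) + |(n : ℝ) + 1 - 2 * t|)
      / ((n : ℝ) + 1) := by
  have hN : (0 : ℝ) < (n : ℝ) + 1 := by positivity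
  unfold psi
  rw [show (1 : ℝ) - 2 * t / ((n : ℝ) + 1) = ((n : ℝ) + 1 - 2 * t) / ((n : ℝ) + 1) by
    field_simp]
  rw [abs_div, abs_of_pos hN]
  ring

private lemma psi_key (n : ℕ) (t : ℝ) (ht0 : 0 ≤ t) (ht1 : t ≤ (n : ℝ) + 1) :
    psi n t ≤ Real.sqrt ((n : ℝ) + 1) ∧
      (psi n t = Real.sqrt ((n : ℝ) + 1) ↔ ((n : ℝ) + 1 - 2 * t) ^ 2 = (n : ℝ) + 1) := by
  have hN : (0 : ℝ) < (n : ℝ) + 1 := by positivity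
  set u := Real.sqrt (t * ((n : ℝ) + 1 - t)) with hu_def
  set sn := Real.sqrt (n : ℝ) with hsn_def
  set r := Real.sqrt ((n : ℝ) + 1) with hr_def
  set S := |(n : ℝ) + 1 - 2 * t| with hS_def
  have hu2 : u ^ 2 = t * ((n : ℝ) + 1 - t) := Real.sq_sqrt (by nlinarith)
  have hsn2 : sn ^ 2 = (n : ℝ) := Real.sq_sqrt (Nat.cast_nonneg n)
  have hr2 : r ^ 2 = (n : ℝ) + 1 := Real.sq_sqrt hN.le
  have hS2 : S ^ 2 = ((n : ℝ) + 1 - 2 * t) ^ 2 := sq_abs _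
  have hu : 0 ≤ u := Real.sqrt_nonneg _
  have hsn : 0 ≤ sn := Real.sqrt_nonneg _
  have hr0 : 0 < r := Real.sqrt_pos.mpr hN
  have hS : 0 ≤ S := abs_nonneg _
  have key : (2 * sn * u + S) ^ 2 + (2 * u - sn * S) ^ 2 = ((n : ℝ) + 1) ^ 3 := by
    linear_combination (4 * u ^ 2 + S ^ 2) * hsn2 + (4 * ((n : ℝ) + 1)) * hu2
      + ((n : ℝ) + 1) * hS2
  have hx0 : 0 ≤ 2 * sn * u + S := by positivity
  have hy0 : 0 ≤ ((n : ℝ) + 1) * r := by positivity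
  have hy2 : (((n : ℝ) + 1) * r) ^ 2 = ((n : ℝ) + 1) ^ 3 := by
    rw [mul_pow, hr2]; ring
  have hpsi : psi n t = (2 * sn * u + S) / ((n : ℝ) + 1) := by
    rw [psi_eq]
  constructor
  · -- psi ≤ r
    rw [hpsi, div_le_iff₀ hN]
    have hsq : (2 * sn * u + S) ^ 2 ≤ (((n : ℝ) + 1) * r) ^ 2 := by
      nlinarith [sq_nonneg (2 * u - sn * S)]
    nlinarith [mul_pos hN hr0]
  · constructor
    · intro h
      have h1 : 2 * sn * u + S = ((n : ℝ) + 1) * r := by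
        rw [hpsi] at h
        field_simp at h
        linarith [h]
      have h1sq : (2 * sn * u + S) ^ 2 = (((n : ℝ) + 1) * r) ^ 2 := by rw [h1]
      have h2 : (2 * u - sn * S) ^ 2 = 0 := by linarith [key, hy2, h1sq]
      have h3 : 2 * u = sn * S := by
        have := sq_eq_zero_iff.mp h2
        linarith
      have h4 : 4 * (t * ((n : ℝ) + 1 - t)) = (n : ℝ) * ((n : ℝ) + 1 - 2 * t) ^ 2 := by
        have e : (2 * u) ^ 2 = (sn * S) ^ 2 := by rw [h3]
        calc 4 * (t * ((n : ℝ) + 1 - t)) = (2 * u) ^ 2 := by rw [mul_pow, hu2]; ring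
          _ = (sn * S) ^ 2 := e
          _ = (n : ℝ) * ((n : ℝ) + 1 - 2 * t) ^ 2 := by rw [mul_pow, hsn2, hS2]
      have h5 : ((n : ℝ) + 1) * (((n : ℝ) + 1 - 2 * t) ^ 2) = ((n : ℝ) + 1) * ((n : ℝ) + 1) := by
        linear_combination -h4
      exact mul_left_cancel₀ hN.ne' h5
    · intro h
      have h4 : (2 * u) ^ 2 = (sn * S) ^ 2 := by
        rw [mul_pow, mul_pow, hu2, hsn2, hS2]
        linear_combination (-((n : ℝ) + 1)) * h
      have h3 : 2 * u = sn * S := sq_inj' (by positivity) (by positivity) h4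
      have h1 : (2 * sn * u + S) ^ 2 = (((n : ℝ) + 1) * r) ^ 2 := by
        rw [hy2]
        linear_combination key - (2 * u - sn * S) * h3
      have h2 : 2 * sn * u + S = ((n : ℝ) + 1) * r := sq_inj' hx0 hy0 h1
      rw [hpsi, h2]
      field_simp
theorem stmt4 (n : ℕ) (hn : 1 ≤ n) :
    max (psi n (a n)) (psi n (a n + 1)) = Real.sqrt (n + 1) ↔
      ∃ k : ℤ, (k : ℝ) = Real.sqrt (n + 1) := by
  have hN : (0 : ℝ) < (n : ℝ) + 1 := by positivity
  have hn1 : (1 : ℝ) ≤ (n : ℝ) := by exact_mod_cast hn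
  set r := Real.sqrt ((n : ℝ) + 1) with hr_def
  have hr2 : r ^ 2 = (n : ℝ) + 1 := Real.sq_sqrt hN.le
  have hr0 : 0 < r := Real.sqrt_pos.mpr hN
  have hr1 : 1 < r := by nlinarith
  have hrle : r ≤ (n : ℝ) + 1 := by nlinarith
  have hadef : a n = ⌊((n : ℝ) + 1) / 2 - r / 2⌋ := rfl
  have haub : (a n : ℝ) ≤ ((n : ℝ) + 1) / 2 - r / 2 := by rw [hadef]; exact Int.floor_le _
  have halb : ((n : ℝ) + 1) / 2 - r / 2 - 1 < (a n : ℝ) := by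
    rw [hadef]; exact Int.sub_one_lt_floor _
  have ha0 : (0 : ℝ) ≤ (a n : ℝ) := by
    rw [hadef]
    have : (0 : ℤ) ≤ ⌊((n : ℝ) + 1) / 2 - r / 2⌋ := Int.floor_nonneg.mpr (by linarith)
    exact_mod_cast this
  have ha1ub : (a n : ℝ) + 1 ≤ (n : ℝ) + 1 := by nlinarith
  have hk1 := psi_key n (a n) ha0 (by linarith)
  have hk2 := psi_key n ((a n : ℝ) + 1) (by linarith) ha1ub
  constructor
  · intro h
    rcases max_choice (psi n (a n : ℝ)) (psi n ((a n : ℝ) + 1)) with hc | hc <;> rw [hc] at h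
    · -- psi n a = r
      have he : ((n : ℝ) + 1 - 2 * (a n : ℝ)) ^ 2 = (n : ℝ) + 1 := hk1.2.mp h
      have hpos : 0 ≤ (n : ℝ) + 1 - 2 * (a n : ℝ) := by linarith
      have : (n : ℝ) + 1 - 2 * (a n : ℝ) = r := sq_inj' hpos hr0.le (by rw [he, hr2])
      exact ⟨(n : ℤ) + 1 - 2 * a n, by push_cast; linarith⟩
    · -- psi n (a+1) = r
      have he : ((n : ℝ) + 1 - 2 * ((a n : ℝ) + 1)) ^ 2 = (n : ℝ) + 1 := hk2.2.mp h
      have habs : |(n : ℝ) + 1 - 2 * ((a n : ℝ) + 1)| = r := by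
        rw [← Real.sqrt_sq_eq_abs, he]
      rcases (abs_eq hr0.le).mp habs with hc2 | hc2
      · linarith
      · linarith
  · rintro ⟨k, hk⟩
    have hk0 : (0 : ℝ) ≤ (k : ℝ) := hk ▸ hr0.le
    have hk2' : (k : ℝ) ^ 2 = (n : ℝ) + 1 := by rw [hk, hr2]
    obtain ⟨m, hm⟩ : Even (k ^ 2 - k) := by
      have : k ^ 2 - k = (k - 1) * ((k - 1) + 1) := by ring
      rw [this]; exact Int.even_mul_succ_self (k - 1)
    have hmr : ((m : ℝ)) = ((n : ℝ) + 1) / 2 - r / 2 := by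
      have : ((k : ℝ) ^ 2 - (k : ℝ)) = (m : ℝ) + (m : ℝ) := by exact_mod_cast congrArg (Int.cast : ℤ → ℝ) hm
      rw [← hk]
      linarith [hk2']
    have ham : a n = m := by
      rw [hadef, ← hmr]; exact Int.floor_intCast m
    have hkey : (n : ℝ) + 1 - 2 * (a n : ℝ) = (k : ℝ) := by
      rw [ham]
      have h2m : (2 : ℝ) * (m : ℝ) = (k : ℝ) ^ 2 - (k : ℝ) := by
        have : ((k : ℝ) ^ 2 - (k : ℝ)) = (m : ℝ) + (m : ℝ) := by exact_mod_cast congrArg (Int.cast : ℤ → ℝ) hm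
        linarith
      linarith [hk2']
    have h1 : psi n (a n : ℝ) = r := hk1.2.mpr (by rw [hkey, hk2'])
    rw [h1]
    exact max_eq_left hk2.1
end

section
/- For a natural number n ≥ 1, max{ψ(a_n), ψ(a_n+1)} = √n if and only if n = 1, where a_n = ⌊(n+1)/2 − √(n+1)/2⌋ and ψ(t) = (2√n/(n+1))·√(t(n+1−t)) + |1 − 2t/(n+1)|. -/
lemma aux_stmt5 (nr x u v s : ℝ) (hn1 : 2 ≤ nr) (hs : s = nr + 1) (hx0 : 0 < x)
    (hx2 : x ^ 2 = nr) (hu0 : 0 < u) (hu1 : u * s < 2 * x)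
    (hv0 : 0 ≤ v) (hv2 : v ^ 2 = 1 - u ^ 2) : x < x * v + u := by
  have hs0 : 0 < s := by linarith
  have hvs : nr - 1 < v * s := by
    have h4 : (u * s) ^ 2 < 4 * nr := by nlinarith [mul_pos hu0 hs0]
    have hv2s : (v * s) ^ 2 = s ^ 2 - (u * s) ^ 2 := by linear_combination s ^ 2 * hv2
    have h5 : (nr - 1) ^ 2 < (v * s) ^ 2 := by nlinarith
    exact lt_of_pow_lt_pow_left₀ 2 (mul_nonneg hv0 hs0.le) h5
  have hkey : x * u < 1 + v := by
    have h3 : x * (u * s) < 2 * nr := by nlinarith [mul_lt_mul_of_pos_left hu1 hx0]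
    have h7 : (x * u) * s < (1 + v) * s := by nlinarith
    exact lt_of_mul_lt_mul_right h7 hs0.le
  have hfinal : (1 + v) * (x * v + u - x) = u * (1 + v - x * u) := by
    linear_combination x * hv2
  have h6 : 0 < (1 + v) * (x * v + u - x) := by
    rw [hfinal]; exact mul_pos hu0 (by linarith)
  by_contra hc
  push_neg at hc
  nlinarith [mul_nonneg (by linarith : (0:ℝ) ≤ 1 + v) (by linarith : (0:ℝ) ≤ x - (x * v + u))]

lemma key_stmt5 (n : ℕ) (hn : 2 ≤ n) (t : ℝ) (h1 : |t - (n + 1) / 2| < Real.sqrt n)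
    (h2 : t ≠ (n + 1) / 2) : Real.sqrt n < psi n t := by
  have hn1 : (2:ℝ) ≤ n := by exact_mod_cast hn
  have hs0 : 0 < (n:ℝ) + 1 := by positivity
  have hsn : 0 < Real.sqrt n := Real.sqrt_pos.mpr (by positivity)
  have hn2 : (Real.sqrt n) ^ 2 = n := Real.sq_sqrt (by positivity)
  set u : ℝ := |1 - 2 * t / ((n:ℝ) + 1)| with hudef
  have hu0 : 0 < u := by
    rw [hudef, abs_pos]
    intro h
    apply h2
    field_simp at h
    linarith
  have hu1 : u * ((n:ℝ) + 1) < 2 * Real.sqrt n := by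
    have hus : u * ((n:ℝ) + 1) = |(n:ℝ) + 1 - 2 * t| :=
      calc u * ((n:ℝ) + 1) = u * |(n:ℝ) + 1| := by rw [abs_of_pos hs0]
        _ = |(1 - 2 * t / ((n:ℝ) + 1)) * ((n:ℝ) + 1)| := (abs_mul _ _).symm
        _ = |(n:ℝ) + 1 - 2 * t| := by
            rw [show (1 - 2 * t / ((n:ℝ) + 1)) * ((n:ℝ) + 1) = (n:ℝ) + 1 - 2 * t by field_simp]
    rw [hus]
    have := abs_sub_lt_iff.mp h1
    rw [abs_sub_lt_iff]
    constructor <;> nlinarith [this.1, this.2]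
  have hu2 : u < 1 := by
    refine lt_of_mul_lt_mul_right ?_ hs0.le
    nlinarith [sq_nonneg (Real.sqrt n - 1)]
  have hts : t * ((n:ℝ) + 1 - t) = (((n:ℝ) + 1) / 2) ^ 2 * (1 - u ^ 2) := by
    have h4 : u ^ 2 = (1 - 2 * t / ((n:ℝ) + 1)) ^ 2 := sq_abs _
    rw [h4]
    field_simp
    ring
  have hsqrt : Real.sqrt (t * ((n:ℝ) + 1 - t)) =
      (((n:ℝ) + 1) / 2) * Real.sqrt (1 - u ^ 2) := by
    rw [hts, Real.sqrt_mul (by positivity), Real.sqrt_sq (by positivity)]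
  have hpsi : psi n t = Real.sqrt n * Real.sqrt (1 - u ^ 2) + u := by
    rw [psi, hsqrt, ← hudef]
    field_simp
  rw [hpsi]
  have hv0 : (0:ℝ) ≤ Real.sqrt (1 - u ^ 2) := Real.sqrt_nonneg _
  have hv2 : (Real.sqrt (1 - u ^ 2)) ^ 2 = 1 - u ^ 2 := Real.sq_sqrt (by nlinarith)
  exact aux_stmt5 n (Real.sqrt n) u (Real.sqrt (1 - u ^ 2)) ((n:ℝ) + 1) hn1 rfl hsn hn2 hu0 hu1
    hv0 hv2

lemma sqrt4_stmt5 : Real.sqrt 4 = 2 := by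
  rw [show (4:ℝ) = 2 ^ 2 by norm_num, Real.sqrt_sq (by norm_num : (0:ℝ) ≤ 2)]

lemma a1_stmt5 : a 1 = 0 := by
  rw [a]
  have h0 := Real.sqrt_nonneg 2
  have h2 := Real.sq_sqrt (by norm_num : (0:ℝ) ≤ 2)
  rw [Int.floor_eq_zero_iff]
  constructor
  · push_cast
    nlinarith
  · push_cast
    nlinarith

lemma a3_stmt5 : a 3 = 1 := by
  rw [a, show ((3:ℕ) + 1 : ℝ) = 4 by norm_num, sqrt4_stmt5]
  norm_num

lemma psi10_stmt5 : psi 1 (0:ℝ) = 1 := by norm_num [psi]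

lemma psi11_stmt5 : psi 1 (1:ℝ) = 1 := by norm_num [psi, Real.sqrt_one]

lemma psi31_stmt5 : psi 3 (1:ℝ) = 2 := by
  rw [psi]
  have h3 : Real.sqrt 3 * Real.sqrt 3 = 3 := Real.mul_self_sqrt (by norm_num)
  rw [show ((3:ℕ):ℝ) = 3 by norm_num]
  rw [show (1:ℝ) * (3 + 1 - 1) = 3 by ring]
  rw [show |1 - 2 * 1 / ((3:ℝ) + 1)| = 1 / 2 by rw [abs_of_nonneg] <;> norm_num]
  nlinarith [h3]

lemma psi32_stmt5 : psi 3 (2:ℝ) = Real.sqrt 3 := by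
  rw [psi]
  rw [show ((3:ℕ):ℝ) = 3 by norm_num]
  rw [show (2:ℝ) * (3 + 1 - 2) = 4 by ring, sqrt4_stmt5]
  rw [show |1 - 2 * 2 / ((3:ℝ) + 1)| = 0 by rw [abs_of_nonneg] <;> norm_num]
  ring

lemma sqrt3lt2_stmt5 : Real.sqrt 3 < 2 := by
  nlinarith [Real.sq_sqrt (by norm_num : (0:ℝ) ≤ 3), Real.sqrt_nonneg 3]

theorem stmt5 (n : ℕ) (hn : 1 ≤ n) :
    max (psi n (a n)) (psi n (a n + 1)) = Real.sqrt n ↔ n = 1 := by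
  constructor
  · intro h
    by_contra hne1
    have hn2 : 2 ≤ n := by omega
    by_cases h3 : n = 3
    · subst h3
      rw [a3_stmt5] at h
      push_cast at h
      rw [psi31_stmt5] at h
      norm_num at h
      rw [psi32_stmt5] at h
      rw [max_eq_left sqrt3lt2_stmt5.le] at h
      have := sqrt3lt2_stmt5
      linarith
    · -- general case : psi n (a n + 1) > sqrt n
      have hf1 : ((a n : ℝ)) ≤ ((n:ℝ) + 1) / 2 - Real.sqrt ((n:ℝ) + 1) / 2 := Int.floor_le _
      have hf2 : ((n:ℝ) + 1) / 2 - Real.sqrt ((n:ℝ) + 1) / 2 < (a n : ℝ) + 1 :=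
        Int.lt_floor_add_one _
      have hs1 : 0 < Real.sqrt ((n:ℝ) + 1) := Real.sqrt_pos.mpr (by positivity)
      have hsn1 : 1 ≤ Real.sqrt n := by
        have h2 := Real.sq_sqrt (by positivity : (0:ℝ) ≤ (n:ℝ))
        have h0 := Real.sqrt_nonneg (n:ℝ)
        have : (2:ℝ) ≤ n := by exact_mod_cast hn2
        nlinarith
      have hA : Real.sqrt ((n:ℝ) + 1) < 2 * Real.sqrt n := by
        have hcast : (2:ℝ) ≤ n := by exact_mod_cast hn2
        have h1 : Real.sqrt ((n:ℝ) + 1) < Real.sqrt (2 ^ 2 * n) :=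
          Real.sqrt_lt_sqrt (by positivity) (by nlinarith)
        rwa [Real.sqrt_mul (by positivity), Real.sqrt_sq (by norm_num : (0:ℝ) ≤ 2)] at h1
      have habs : |((a n : ℝ) + 1) - ((n:ℝ) + 1) / 2| < Real.sqrt n := by
        rw [abs_sub_lt_iff]
        constructor <;> linarith
      have hne : ((a n : ℝ) + 1) ≠ ((n:ℝ) + 1) / 2 := by
        rcases Nat.lt_or_ge n 4 with h4 | h4
        · -- n = 2
          have hn2' : n = 2 := by omega
          subst hn2'
          intro heq
          have h2 : ((2 * a 2 + 2 : ℤ) : ℝ) = 3 := by push_cast at heq ⊢; linarith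
          have h2' : (2 * a 2 + 2 : ℤ) = 3 := by exact_mod_cast h2
          omega
        · -- n ≥ 4 : a n + 1 < (n+1)/2
          have hcast : (4:ℝ) ≤ n := by exact_mod_cast h4
          have h5 : 2 < Real.sqrt ((n:ℝ) + 1) := by
            have h2 := Real.sq_sqrt (by positivity : (0:ℝ) ≤ (n:ℝ) + 1)
            nlinarith
          exact ne_of_lt (by linarith)
      have hgt := key_stmt5 n hn2 ((a n : ℝ) + 1) habs hne
      have hle : psi n ((a n : ℝ) + 1) ≤ Real.sqrt n := h ▸ le_max_right _ _
      linarith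
  · intro h1
    subst h1
    rw [a1_stmt5]
    push_cast
    rw [psi10_stmt5, show (0:ℝ) + 1 = 1 by norm_num, psi11_stmt5]
    norm_num [Real.sqrt_one]
end

section
/- Let x⁽¹⁾,…,x⁽ⁿ⁺¹⁾ ∈ ℝⁿ with centroid c, let 1 ≤ m ≤ n, r = (1/m)√(m − m(m−1)/n), and for each m-element subset J of {1,…,n+1} set g_J = (1/m)Σ_{j∈J} x⁽ʲ⁾ and y_J = c + (1/r)(c − g_J). Then (1/N)·Σ_J ‖y_J‖² = (1/(n+1))·Σⱼ ‖x⁽ʲ⁾‖², where N = C(n+1, m). -/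
open Finset


lemma count_lemma {α : Type*} [DecidableEq α] (s t : Finset α) (ht : t ⊆ s) (m : ℕ)
    (htm : t.card ≤ m) :
    ((powersetCard m s).filter (fun J => t ⊆ J)).card = (s.card - t.card).choose (m - t.card) := by
  rw [← Finset.card_sdiff_of_subset ht, ← card_powersetCard]
  apply Finset.card_bij' (fun J _ => J \ t) (fun K _ => K ∪ t)
  · intro J hJ
    simp only [mem_filter, mem_powersetCard] at hJ
    obtain ⟨⟨hJs, hJc⟩, htJ⟩ := hJ
    rw [mem_powersetCard]
    exact ⟨sdiff_subset_sdiff hJs Subset.rfl, by rw [card_sdiff_of_subset htJ, hJc]⟩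
  · intro K hK
    rw [mem_powersetCard] at hK
    obtain ⟨hKs, hKc⟩ := hK
    have hdisj : Disjoint K t := disjoint_of_subset_left hKs sdiff_disjoint
    simp only [mem_filter, mem_powersetCard]
    refine ⟨⟨union_subset (hKs.trans sdiff_subset) ht, ?_⟩, subset_union_right⟩
    rw [card_union_of_disjoint hdisj, hKc]
    omega
  · intro J hJ
    simp only [mem_filter] at hJ
    exact sdiff_union_of_subset hJ.2
  · intro K hK
    rw [mem_powersetCard] at hK
    exact union_sdiff_cancel_right (disjoint_of_subset_left hK.1 sdiff_disjoint)

lemma count_lemma' {α : Type*} [DecidableEq α] (s t : Finset α) (m : ℕ) (htm : m < t.card) :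
    ((powersetCard m s).filter (fun J => t ⊆ J)).card = 0 := by
  rw [card_eq_zero, filter_eq_empty_iff]
  intro J hJ hsub
  rw [mem_powersetCard] at hJ
  have := card_le_card hsub
  omega

lemma sumA (n m : ℕ) (hm : 1 ≤ m) (f : Fin (n+1) → ℝ) :
    ∑ J ∈ powersetCard m (univ : Finset (Fin (n+1))), ∑ j ∈ J, f j
      = (n.choose (m-1) : ℝ) * ∑ j, f j := by
  have h1 : ∀ J : Finset (Fin (n+1)), ∑ j ∈ J, f j = ∑ j, if j ∈ J then f j else 0 := by
    intro J; rw [sum_ite_mem, univ_inter]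
  simp_rw [h1]
  rw [Finset.sum_comm, Finset.mul_sum]
  refine Finset.sum_congr rfl fun j _ => ?_
  rw [← sum_filter, sum_const, nsmul_eq_mul]
  have h2 : filter (fun J : Finset (Fin (n+1)) => j ∈ J) (powersetCard m univ)
      = filter (fun J => {j} ⊆ J) (powersetCard m univ) := by
    apply filter_congr; intro J _; simp
  rw [h2, count_lemma _ _ (subset_univ _) m (by simpa using hm), card_univ,
    Fintype.card_fin, card_singleton]
  norm_num

lemma sumPair (n m : ℕ) (hm : 1 ≤ m) (j k : Fin (n+1)) :
    ∑ J ∈ powersetCard m (univ : Finset (Fin (n+1))),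
        (if j ∈ J then (1:ℝ) else 0) * (if k ∈ J then 1 else 0)
      = if j = k then (n.choose (m-1) : ℝ)
        else (if 2 ≤ m then ((n-1).choose (m-2) : ℝ) else 0) := by
  have h1 : ∀ J : Finset (Fin (n+1)),
      (if j ∈ J then (1:ℝ) else 0) * (if k ∈ J then 1 else 0)
        = if ({j, k} : Finset (Fin (n+1))) ⊆ J then 1 else 0 := by
    intro J
    by_cases hj : j ∈ J <;> by_cases hk : k ∈ J <;>
      simp [hj, hk, Finset.insert_subset_iff]
  simp_rw [h1]
  rw [← sum_filter, sum_const, nsmul_eq_mul, mul_one]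
  by_cases hjk : j = k
  · subst hjk
    simp only [if_pos rfl]
    rw [show ({j, j} : Finset (Fin (n+1))) = {j} by simp,
      count_lemma _ _ (subset_univ _) m (by simpa using hm)]
    simp
  · rw [if_neg hjk]
    have hcard : ({j, k} : Finset (Fin (n+1))).card = 2 := card_pair hjk
    by_cases h2m : 2 ≤ m
    · rw [if_pos h2m, count_lemma _ _ (subset_univ _) m (by omega)]
      rw [hcard, card_univ, Fintype.card_fin]
      congr 2
    · rw [if_neg h2m, count_lemma' _ _ m (by omega)]
      simp

lemma sumSq (n m : ℕ) (hm : 1 ≤ m) (f : Fin (n+1) → ℝ) :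
    ∑ J ∈ powersetCard m (univ : Finset (Fin (n+1))), (∑ j ∈ J, f j)^2
      = (if 2 ≤ m then ((n-1).choose (m-2) : ℝ) else 0) * (∑ j, f j)^2
        + ((n.choose (m-1) : ℝ) - (if 2 ≤ m then ((n-1).choose (m-2) : ℝ) else 0))
          * ∑ j, (f j)^2 := by
  set A : ℝ := (n.choose (m-1) : ℝ) with hA
  set B : ℝ := if 2 ≤ m then ((n-1).choose (m-2) : ℝ) else 0 with hB
  have key : ∑ J ∈ powersetCard m (univ : Finset (Fin (n+1))), (∑ j ∈ J, f j)^2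
      = ∑ j, ∑ k, (if j = k then A else B) * (f j * f k) := by
    have h1 : ∀ J : Finset (Fin (n+1)), (∑ j ∈ J, f j)^2
        = ∑ j, ∑ k, ((if j ∈ J then (1:ℝ) else 0) * (if k ∈ J then 1 else 0))
            * (f j * f k) := by
      intro J
      have h0 : ∑ j ∈ J, f j = ∑ j, if j ∈ J then f j else 0 := by
        rw [sum_ite_mem, univ_inter]
      rw [h0, sq, Finset.sum_mul_sum]
      refine Finset.sum_congr rfl fun j _ => Finset.sum_congr rfl fun k _ => ?_
      by_cases hj : j ∈ J <;> by_cases hk : k ∈ J <;> simp [hj, hk]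
    simp_rw [h1]
    rw [Finset.sum_comm]
    refine Finset.sum_congr rfl fun j _ => ?_
    rw [Finset.sum_comm]
    refine Finset.sum_congr rfl fun k _ => ?_
    rw [← Finset.sum_mul, sumPair n m hm j k]
  rw [key]
  have h2 : ∀ j k : Fin (n+1), (if j = k then A else B) * (f j * f k)
      = B * (f j * f k) + (if j = k then (A - B) * (f j * f k) else 0) := by
    intro j k
    by_cases h : j = k <;> simp [h] <;> ring
  have h3 : ∀ j : Fin (n+1), ∑ k, (if j = k then (A - B) * (f j * f k) else 0)
      = (A - B) * (f j)^2 := by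
    intro j
    rw [Finset.sum_ite_eq]
    simp [sq]
  simp_rw [h2, Finset.sum_add_distrib, h3]
  have h4 : ∑ x : Fin (n+1), ∑ x1 : Fin (n+1), B * (f x * f x1)
      = B * (∑ j, f j)^2 := by
    rw [sq, Finset.sum_mul_sum, Finset.mul_sum]
    exact Finset.sum_congr rfl fun j _ => by rw [Finset.mul_sum]
  rw [h4, ← Finset.mul_sum]

lemma natid1 (n m : ℕ) (hm : 1 ≤ m) : (m : ℝ) * ((n+1).choose m) = ((n:ℝ)+1) * (n.choose (m-1)) := by
  have h := Nat.add_one_mul_choose_eq n (m-1)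
  rw [Nat.sub_add_cancel hm] at h
  have h2 := congrArg (Nat.cast : ℕ → ℝ) h
  push_cast at h2
  linarith
lemma natid2 (n m : ℕ) (h2 : 2 ≤ m) (hmn : m ≤ n) :
    ((m:ℝ) - 1) * (n.choose (m-1)) = (n:ℝ) * ((n-1).choose (m-2)) := by
  have hn : 1 ≤ n := by omega
  have h := Nat.add_one_mul_choose_eq (n-1) (m-2)
  rw [Nat.sub_add_cancel hn,
    show m - 2 + 1 = m - 1 by omega] at h
  have h3 := congrArg (Nat.cast : ℕ → ℝ) h
  rw [Nat.cast_mul, Nat.cast_mul, Nat.cast_sub (by omega : 1 ≤ m)] at h3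
  push_cast at h3
  linarith

lemma core (m n : ℕ) (hm : 1 ≤ m) (hmn : m ≤ n) (f : Fin (n+1) → ℝ) (c s : ℝ)
    (hc : ∑ j, f j = ((n:ℝ)+1) * c)
    (hs : s^2 = ((m:ℝ)*n)/((n:ℝ) - m + 1)) :
    ∑ J ∈ powersetCard m (univ : Finset (Fin (n+1))),
        (c + s * (c - (m:ℝ)⁻¹ * ∑ j ∈ J, f j))^2
      = (((n+1).choose m : ℝ)/((n:ℝ)+1)) * ∑ j, (f j)^2 := by
  set K : ℝ := ((m:ℝ)*n)/((n:ℝ) - m + 1) with hK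
  have hm0 : (m:ℝ) ≠ 0 := Nat.cast_ne_zero.2 (by omega)
  have hn0 : (n:ℝ) ≠ 0 := Nat.cast_ne_zero.2 (by omega)
  have hnm1 : (n:ℝ) - m + 1 ≠ 0 := by
    have : (m:ℝ) ≤ n := by exact_mod_cast hmn
    linarith
  have expand : ∀ S : ℝ, (c + s * (c - (m:ℝ)⁻¹ * S))^2
      = (c^2 + 2*c^2*s + K*c^2)
        + (-(2*c*(m:ℝ)⁻¹*s) - 2*K*c*(m:ℝ)⁻¹) * S
        + (K*((m:ℝ)⁻¹)^2) * S^2 := by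
    intro S
    have h := hs
    linear_combination ((c - (m:ℝ)⁻¹*S)^2) * h
  simp_rw [expand]
  rw [Finset.sum_add_distrib, Finset.sum_add_distrib, ← Finset.mul_sum, ← Finset.mul_sum,
    Finset.sum_const, card_powersetCard, card_univ, Fintype.card_fin, nsmul_eq_mul,
    sumA n m hm f, sumSq n m hm f, hc]
  -- now pure algebra
  set A : ℝ := (n.choose (m-1) : ℝ) with hA
  set N : ℝ := ((n+1).choose m : ℝ) with hN
  set B : ℝ := if 2 ≤ m then ((n-1).choose (m-2) : ℝ) else 0 with hB
  set Q : ℝ := ∑ j, (f j)^2 with hQ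
  have hNA : (m:ℝ) * N = ((n:ℝ)+1) * A := natid1 n m hm
  have hAB : ((m:ℝ) - 1) * A = (n:ℝ) * B := by
    by_cases h2 : 2 ≤ m
    · rw [hB, if_pos h2]; exact natid2 n m h2 hmn
    · have : m = 1 := by omega
      subst this
      rw [hB]
      norm_num
  have hNval : N = ((n:ℝ)+1) * A / m := by field_simp [hm0] at hNA ⊢; linarith
  have hBval : B = ((m:ℝ) - 1) * A / n := by field_simp [hn0] at hAB ⊢; linarith
  rw [hNval, hBval, hK]
  field_simp
  ring

lemma normsq {n : ℕ} (v : EuclideanSpace ℝ (Fin n)) : ‖v‖^2 = ∑ i, (v i)^2 := by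
  rw [EuclideanSpace.norm_eq, Real.sq_sqrt (by positivity)]
  simp [sq_abs]

theorem stmt10 (m n : ℕ) (hm : 1 ≤ m) (hmn : m ≤ n)
    (x : Fin (n + 1) → EuclideanSpace ℝ (Fin n))
    (c : EuclideanSpace ℝ (Fin n)) (hc : c = ((n : ℝ) + 1)⁻¹ • ∑ j, x j)
    (r : ℝ) (hr : r = (1 / (m : ℝ)) * Real.sqrt ((m : ℝ) - m * (m - 1) / n)) :
    (1 / ((n + 1).choose m : ℝ)) *
        ∑ J ∈ Finset.powersetCard m (Finset.univ : Finset (Fin (n + 1))),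
          ‖c + r⁻¹ • (c - (m : ℝ)⁻¹ • ∑ j ∈ J, x j)‖ ^ 2 =
      (1 / ((n : ℝ) + 1)) * ∑ j, ‖x j‖ ^ 2 := by
  have hm0 : (m:ℝ) ≠ 0 := Nat.cast_ne_zero.2 (by omega)
  have hn0 : (n:ℝ) ≠ 0 := Nat.cast_ne_zero.2 (by omega)
  have hmn' : (m:ℝ) ≤ n := by exact_mod_cast hmn
  have hm1 : (1:ℝ) ≤ m := by exact_mod_cast hm
  have hnm1 : (0:ℝ) < (n:ℝ) - m + 1 := by linarith
  have hin : (0:ℝ) ≤ (m : ℝ) - m * (m - 1) / n := by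
    rw [sub_nonneg, div_le_iff₀ (by positivity)]
    nlinarith
  have hr2 : r^2 = ((n:ℝ) - m + 1)/((m:ℝ)*n) := by
    rw [hr, mul_pow, Real.sq_sqrt hin]
    field_simp
    ring
  have hrpos : 0 < r^2 := by rw [hr2]; positivity
  have hr0 : r ≠ 0 := by intro h; rw [h] at hrpos; simp at hrpos
  have hs : (r⁻¹)^2 = ((m:ℝ)*n)/((n:ℝ) - m + 1) := by
    rw [inv_pow, hr2, inv_div]
  have hN0 : (((n+1).choose m : ℕ) : ℝ) ≠ 0 := by
    have : 0 < (n+1).choose m := Nat.choose_pos (by omega)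
    exact_mod_cast this.ne'
  -- coordinatewise centroid
  have hci : ∀ i, ∑ j, x j i = ((n:ℝ)+1) * c i := by
    intro i
    have h1 : c i = ((n : ℝ) + 1)⁻¹ * (∑ j, x j) i := by
      rw [hc]; simp [PiLp.smul_apply, smul_eq_mul]
    have h2 : (∑ j, x j) i = ∑ j, x j i :=
      by simp
    rw [h1, h2]
    field_simp
  -- coordinates of the y vector
  have hyi : ∀ (J : Finset (Fin (n+1))) (i : Fin n),
      (c + r⁻¹ • (c - (m : ℝ)⁻¹ • ∑ j ∈ J, x j)) i
        = c i + r⁻¹ * (c i - (m:ℝ)⁻¹ * ∑ j ∈ J, x j i) := by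
    intro J i
    have h2 : (∑ j ∈ J, x j) i = ∑ j ∈ J, x j i :=
      by simp
    simp [PiLp.add_apply, PiLp.smul_apply, PiLp.sub_apply, smul_eq_mul, h2]
  -- rewrite norms
  have hL : ∀ J : Finset (Fin (n+1)),
      ‖c + r⁻¹ • (c - (m : ℝ)⁻¹ • ∑ j ∈ J, x j)‖ ^ 2
        = ∑ i, (c i + r⁻¹ * (c i - (m:ℝ)⁻¹ * ∑ j ∈ J, x j i))^2 := by
    intro J
    rw [normsq]
    exact Finset.sum_congr rfl fun i _ => by rw [hyi J i]
  simp_rw [hL, normsq]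
  rw [Finset.sum_comm]
  conv_rhs => rw [Finset.sum_comm]
  have hcore : ∀ i : Fin n,
      ∑ J ∈ powersetCard m (univ : Finset (Fin (n+1))),
          (c i + r⁻¹ * (c i - (m:ℝ)⁻¹ * ∑ j ∈ J, x j i))^2
        = (((n+1).choose m : ℝ)/((n:ℝ)+1)) * ∑ j, (x j i)^2 := by
    intro i
    exact core m n hm hmn (fun j => x j i) (c i) r⁻¹ (hci i) hs
  simp_rw [hcore]
  rw [← Finset.mul_sum]
  field_simp
end

section
/- Let x⁽¹⁾,…,x⁽ⁿ⁺¹⁾ be points in the closed unit ball of ℝⁿ, let 1 ≤ m ≤ n, r = (1/m)√(m − m(m−1)/n), c their centroid, and for each m-element subset J set y_J = c + (1/r)(c − (1/m)Σ_{j∈J} x⁽ʲ⁾). Then there exists an m-element subset J with ‖y_J‖ ≤ 1. -/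
open Finset
set_option maxHeartbeats 1000000

lemma cardA {α : Type*} [DecidableEq α] (s : Finset α) (k : ℕ) (i : α) (hi : i ∈ s) :
    ((s.powersetCard (k+1)).filter (fun J => i ∈ J)).card = (s.card - 1).choose k := by
  rw [← Finset.card_erase_of_mem hi, ← Finset.card_powersetCard k (s.erase i)]
  apply Finset.card_bij (fun J _ => J.erase i)
  · intro J hJ
    simp only [Finset.mem_filter, Finset.mem_powersetCard] at hJ ⊢
    refine ⟨Finset.erase_subset_erase i hJ.1.1, ?_⟩
    rw [Finset.card_erase_of_mem hJ.2, hJ.1.2]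
    omega
  · intro J1 h1 J2 h2 he
    simp only [Finset.mem_filter] at h1 h2
    rw [← Finset.insert_erase h1.2, ← Finset.insert_erase h2.2, he]
  · intro K hK
    simp only [Finset.mem_powersetCard] at hK
    have hiK : i ∉ K := fun h => (Finset.mem_erase.mp (hK.1 h)).1 rfl
    refine ⟨insert i K, ?_, by rw [Finset.erase_insert hiK]⟩
    simp only [Finset.mem_filter, Finset.mem_powersetCard]
    exact ⟨⟨Finset.insert_subset hi (hK.1.trans (Finset.erase_subset _ _)),
      by rw [Finset.card_insert_of_notMem hiK, hK.2]⟩, Finset.mem_insert_self _ _⟩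

lemma swap1 {α : Type*} [Fintype α] [DecidableEq α] (T : Finset (Finset α)) (g : α → ℝ) :
    ∑ J ∈ T, ∑ j ∈ J, g j
      = ∑ j, ((T.filter (fun J => j ∈ J)).card : ℝ) * g j := by
  calc ∑ J ∈ T, ∑ j ∈ J, g j = ∑ J ∈ T, ∑ j : α, if j ∈ J then g j else 0 := by
        refine Finset.sum_congr rfl fun J _ => ?_
        rw [Finset.sum_ite_mem, Finset.univ_inter]
    _ = ∑ j : α, ∑ J ∈ T, if j ∈ J then g j else 0 := Finset.sum_comm
    _ = ∑ j, ((T.filter (fun J => j ∈ J)).card : ℝ) * g j := by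
        refine Finset.sum_congr rfl fun j _ => ?_
        rw [← Finset.sum_filter, Finset.sum_const, nsmul_eq_mul]

lemma swap2 {α : Type*} [Fintype α] [DecidableEq α] (T : Finset (Finset α)) (g : α → α → ℝ) :
    ∑ J ∈ T, ∑ i ∈ J, ∑ j ∈ J, g i j
      = ∑ i, ∑ j, ((T.filter (fun J => i ∈ J ∧ j ∈ J)).card : ℝ) * g i j := by
  calc ∑ J ∈ T, ∑ i ∈ J, ∑ j ∈ J, g i j
      = ∑ J ∈ T, ∑ i : α, ∑ j : α, if i ∈ J ∧ j ∈ J then g i j else 0 := by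
        refine Finset.sum_congr rfl fun J _ => ?_
        rw [eq_comm]
        calc ∑ i : α, ∑ j : α, (if i ∈ J ∧ j ∈ J then g i j else 0)
            = ∑ i : α, (if i ∈ J then ∑ j ∈ J, g i j else 0) := by
              refine Finset.sum_congr rfl fun i _ => ?_
              by_cases hi : i ∈ J
              · simp [hi, Finset.sum_ite_mem]
              · simp [hi]
          _ = ∑ i ∈ J, ∑ j ∈ J, g i j := by rw [Finset.sum_ite_mem, Finset.univ_inter]
    _ = ∑ i : α, ∑ j : α, ∑ J ∈ T, if i ∈ J ∧ j ∈ J then g i j else 0 := by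
        rw [Finset.sum_comm]
        exact Finset.sum_congr rfl fun i _ => Finset.sum_comm
    _ = ∑ i, ∑ j, ((T.filter (fun J => i ∈ J ∧ j ∈ J)).card : ℝ) * g i j := by
        refine Finset.sum_congr rfl fun i _ => Finset.sum_congr rfl fun j _ => ?_
        rw [← Finset.sum_filter, Finset.sum_const, nsmul_eq_mul]

theorem stmt11 (m n : ℕ) (hm : 1 ≤ m) (hmn : m ≤ n)
    (x : Fin (n + 1) → EuclideanSpace ℝ (Fin n)) (hx : ∀ j, ‖x j‖ ≤ 1)
    (c : EuclideanSpace ℝ (Fin n)) (hc : c = ((n : ℝ) + 1)⁻¹ • ∑ j, x j)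
    (r : ℝ) (hr : r = (1 / (m : ℝ)) * Real.sqrt ((m : ℝ) - m * (m - 1) / n)) :
    ∃ J ∈ Finset.powersetCard m (Finset.univ : Finset (Fin (n + 1))),
      ‖c + r⁻¹ • (c - (m : ℝ)⁻¹ • ∑ j ∈ J, x j)‖ ≤ 1 := by
  classical
  set T := Finset.powersetCard m (Finset.univ : Finset (Fin (n+1))) with hT
  have hn : 1 ≤ n := hm.trans hmn
  have hn1 : (0:ℝ) < (n:ℝ) + 1 := by positivity
  have hnR : (0:ℝ) < (n:ℝ) := by exact_mod_cast hn
  have hmR : (0:ℝ) < (m:ℝ) := by exact_mod_cast hm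
  -- centered points
  set z : Fin (n+1) → EuclideanSpace ℝ (Fin n) := fun j => x j - c with hz
  have hsumx : ∑ j, x j = ((n:ℝ)+1) • c := by
    rw [hc, smul_smul, mul_inv_cancel₀ hn1.ne', one_smul]
  have hzsum : ∑ j, z j = 0 := by
    simp only [hz, Finset.sum_sub_distrib, Finset.sum_const, Finset.card_univ,
      Fintype.card_fin, hsumx]
    rw [← Nat.cast_smul_eq_nsmul ℝ, Nat.cast_add, Nat.cast_one, sub_self]
  -- counting
  have hc1 : ∀ j : Fin (n+1), (T.filter (fun J => j ∈ J)).card = n.choose (m-1) := by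
    intro j
    have h := cardA (Finset.univ : Finset (Fin (n+1))) (m-1) j (Finset.mem_univ j)
    rw [Nat.sub_add_cancel hm] at h
    simpa [Finset.card_univ] using h
  have hc2 : ∀ i j : Fin (n+1), i ≠ j →
      (T.filter (fun J => i ∈ J ∧ j ∈ J)).card + (n-1).choose (m-1) = n.choose (m-1) := by
    intro i j hij
    have hsplit : (T.filter (fun J => i ∈ J ∧ j ∈ J)).card
        + (T.filter (fun J => i ∈ J ∧ j ∉ J)).card = (T.filter (fun J => i ∈ J)).card := by
      have h := Finset.card_filter_add_card_filter_not
        (s := T.filter (fun J => i ∈ J)) (p := fun J => j ∈ J)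
      rw [Finset.filter_filter, Finset.filter_filter] at h
      simpa using h
    have h2 : (T.filter (fun J => i ∈ J ∧ j ∉ J)).card = (n-1).choose (m-1) := by
      have heq : T.filter (fun J => i ∈ J ∧ j ∉ J)
          = ((Finset.univ.erase j).powersetCard m).filter (fun J => i ∈ J) := by
        ext J
        simp only [hT, Finset.mem_filter, Finset.mem_powersetCard, Finset.subset_erase]
        constructor
        · rintro ⟨⟨h1, h2⟩, h3, h4⟩; exact ⟨⟨⟨h1, h4⟩, h2⟩, h3⟩
        · rintro ⟨⟨⟨h1, h4⟩, h2⟩, h3⟩; exact ⟨⟨h1, h2⟩, h3, h4⟩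
      rw [heq]
      have h := cardA (Finset.univ.erase j) (m-1) i (by simp [Finset.mem_erase, hij])
      rw [Nat.sub_add_cancel hm] at h
      simpa [Finset.card_erase_of_mem, Finset.card_univ] using h
    rw [← hc1 i, ← hsplit, h2]
  set aR : ℝ := (n.choose (m-1) : ℝ) with haR
  set D : ℝ := ((n-1).choose (m-1) : ℝ) with hD
  have hw : ∀ i j : Fin (n+1),
      ((T.filter (fun J => i ∈ J ∧ j ∈ J)).card : ℝ)
        = (aR - D) + (if i = j then D else 0) := by
    intro i j
    by_cases hij : i = j
    · subst hij
      simp only [and_self, eq_self_iff_true, if_true]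
      rw [hc1 i, haR]; ring
    · rw [if_neg hij]
      have h := hc2 i j hij
      have hcast : ((T.filter (fun J => i ∈ J ∧ j ∈ J)).card : ℝ)
          + (((n-1).choose (m-1) : ℕ) : ℝ) = ((n.choose (m-1) : ℕ) : ℝ) := by
        exact_mod_cast h
      rw [haR, hD]; linarith
  set S : ℝ := ∑ j, ‖z j‖^2 with hS
  -- key sums
  have key1 : ∑ J ∈ T, (inner ℝ c (∑ j ∈ J, z j) : ℝ) = 0 := by
    have h1 : ∀ J : Finset (Fin (n+1)), (inner ℝ c (∑ j ∈ J, z j) : ℝ)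
        = ∑ j ∈ J, (inner ℝ c (z j) : ℝ) := fun J => inner_sum _ _ _
    rw [Finset.sum_congr rfl fun J _ => h1 J, swap1]
    have : ∀ j : Fin (n+1), ((T.filter (fun J => j ∈ J)).card : ℝ) = aR := by
      intro j; rw [hc1 j]
    rw [Finset.sum_congr rfl fun j _ => by rw [this j]]
    rw [← Finset.mul_sum, ← inner_sum, hzsum, inner_zero_right, mul_zero]
  have key2 : ∑ J ∈ T, ‖∑ j ∈ J, z j‖^2 = D * S := by
    have h1 : ∀ J : Finset (Fin (n+1)), ‖∑ j ∈ J, z j‖^2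
        = ∑ i ∈ J, ∑ j ∈ J, (inner ℝ (z i) (z j) : ℝ) := by
      intro J
      rw [← real_inner_self_eq_norm_sq, sum_inner]
      exact Finset.sum_congr rfl fun i _ => inner_sum _ _ _
    rw [Finset.sum_congr rfl fun J _ => h1 J, swap2]
    have h2 : ∀ i j : Fin (n+1),
        ((T.filter (fun J => i ∈ J ∧ j ∈ J)).card : ℝ) * (inner ℝ (z i) (z j) : ℝ)
        = (aR - D) * (inner ℝ (z i) (z j) : ℝ)
          + (if i = j then D * (inner ℝ (z i) (z j) : ℝ) else 0) := by
      intro i j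
      rw [hw i j]
      by_cases hij : i = j <;> simp [hij] <;> ring
    rw [Finset.sum_congr rfl fun i _ => Finset.sum_congr rfl fun j _ => h2 i j]
    have h3 : ∑ i : Fin (n+1), ∑ j : Fin (n+1), (inner ℝ (z i) (z j) : ℝ) = 0 := by
      have h4 : ∀ i : Fin (n+1), ∑ j : Fin (n+1), (inner ℝ (z i) (z j) : ℝ)
          = (inner ℝ (z i) (∑ j, z j) : ℝ) := fun i => (inner_sum _ _ _).symm
      rw [Finset.sum_congr rfl fun i _ => h4 i]
      simp [hzsum]
    calc ∑ i : Fin (n+1), ∑ j : Fin (n+1), ((aR - D) * (inner ℝ (z i) (z j) : ℝ)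
          + (if i = j then D * (inner ℝ (z i) (z j) : ℝ) else 0))
        = (aR - D) * (∑ i : Fin (n+1), ∑ j : Fin (n+1), (inner ℝ (z i) (z j) : ℝ))
          + ∑ i : Fin (n+1), D * ‖z i‖^2 := by
          rw [Finset.mul_sum]
          rw [← Finset.sum_add_distrib]
          refine Finset.sum_congr rfl fun i _ => ?_
          rw [Finset.sum_add_distrib, Finset.mul_sum, Finset.sum_ite_eq Finset.univ i
            (fun j => D * (inner ℝ (z i) (z j) : ℝ)), if_pos (Finset.mem_univ i),
            real_inner_self_eq_norm_sq]
      _ = D * S := by rw [h3, mul_zero, zero_add, hS, Finset.mul_sum]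
  -- constants
  set N : ℕ := (n+1).choose m with hN
  have hTcard : T.card = N := by
    rw [hT, Finset.card_powersetCard, Finset.card_univ, Fintype.card_fin]
  set A : ℝ := (m:ℝ) - m*((m:ℝ)-1)/n with hA
  have hmnR : (m:ℝ) ≤ (n:ℝ) := by exact_mod_cast hmn
  have hAeq : A = (m:ℝ) * ((n:ℝ) - m + 1) / n := by rw [hA]; field_simp; ring
  have hApos : 0 < A := by
    rw [hAeq]; exact div_pos (mul_pos hmR (by linarith)) hnR
  have hrpos : 0 < r := by
    rw [hr]; exact mul_pos (by positivity) (Real.sqrt_pos.mpr hApos)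
  have hr2 : r^2 * (m:ℝ)^2 = A := by
    rw [hr, mul_pow, Real.sq_sqrt hApos.le]; field_simp
  set t : ℝ := (r * m)⁻¹ with ht
  have ht2 : t^2 = A⁻¹ := by rw [ht, inv_pow, mul_pow, hr2]
  -- nat identity
  have natid : (n-1).choose (m-1) * ((n+1) * n) = N * (m * (n - m + 1)) := by
    have h1 : n * ((n-1).choose (m-1)) = n.choose m * m := by
      have h := Nat.add_one_mul_choose_eq (n-1) (m-1)
      rwa [Nat.sub_add_cancel hn,
        Nat.sub_add_cancel hm] at h
    have h2 : n.choose m * m = n.choose (m-1) * (n - m + 1) := by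
      have h := Nat.choose_succ_right_eq n (m-1)
      rw [Nat.sub_add_cancel hm] at h
      rw [h, show n - (m-1) = n - m + 1 by omega]
    have h3 : (n+1) * n.choose (m-1) = N * m := by
      have h := Nat.add_one_mul_choose_eq n (m-1)
      rwa [Nat.sub_add_cancel hm, ← hN] at h
    calc (n-1).choose (m-1) * ((n+1)*n) = (n+1) * (n * ((n-1).choose (m-1))) := by ring
      _ = (n+1) * (n.choose m * m) := by rw [h1]
      _ = (n+1) * (n.choose (m-1) * (n-m+1)) := by rw [h2]
      _ = ((n+1) * n.choose (m-1)) * (n-m+1) := by ring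
      _ = (N * m) * (n-m+1) := by rw [h3]
      _ = N * (m * (n-m+1)) := by ring
  have hscalar : t^2 * D = (N : ℝ) / ((n:ℝ)+1) := by
    have h := congrArg (Nat.cast : ℕ → ℝ) natid
    push_cast [Nat.cast_sub hmn] at h
    rw [ht2, hAeq, hD]
    have hne : (n:ℝ) - m + 1 ≠ 0 := by linarith
    field_simp
    linear_combination h
  -- S relation
  have hSval : S = (∑ j, ‖x j‖^2) - ((n:ℝ)+1) * ‖c‖^2 := by
    have h1 : ∀ j, ‖z j‖^2 = ‖x j‖^2 - 2 * (inner ℝ (x j) c : ℝ) + ‖c‖^2 :=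
      fun j => norm_sub_sq_real _ _
    rw [hS, Finset.sum_congr rfl fun j _ => h1 j]
    have h2 : ∑ j : Fin (n+1), (inner ℝ (x j) c : ℝ) = ((n:ℝ)+1) * ‖c‖^2 := by
      rw [← sum_inner, hsumx, real_inner_smul_left, real_inner_self_eq_norm_sq]
    rw [Finset.sum_add_distrib, Finset.sum_sub_distrib, ← Finset.mul_sum, h2,
      Finset.sum_const, Finset.card_univ, Fintype.card_fin, nsmul_eq_mul]
    push_cast
    ring
  -- per-J identities
  have hy : ∀ J ∈ T, c + r⁻¹ • (c - (m:ℝ)⁻¹ • ∑ j ∈ J, x j) = c - t • ∑ j ∈ J, z j := by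
    intro J hJ
    have hcardJ : J.card = m := (Finset.mem_powersetCard.mp (hT ▸ hJ)).2
    have hxz : ∑ j ∈ J, x j = (∑ j ∈ J, z j) + (m:ℝ) • c := by
      have h : ∑ j ∈ J, z j = (∑ j ∈ J, x j) - J.card • c := by
        simp [hz, Finset.sum_sub_distrib]
      rw [h, hcardJ, Nat.cast_smul_eq_nsmul ℝ]
      abel
    rw [hxz, smul_add, smul_smul, inv_mul_cancel₀ hmR.ne', one_smul]
    have h : c - ((m:ℝ)⁻¹ • ∑ j ∈ J, z j + c) = -((m:ℝ)⁻¹ • ∑ j ∈ J, z j) := by abel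
    rw [h, smul_neg, smul_smul, ht, mul_inv]
    abel
  have hnorm : ∀ J ∈ T, ‖c + r⁻¹ • (c - (m:ℝ)⁻¹ • ∑ j ∈ J, x j)‖^2
      = ‖c‖^2 - 2*t*(inner ℝ c (∑ j ∈ J, z j) : ℝ) + t^2 * ‖∑ j ∈ J, z j‖^2 := by
    intro J hJ
    rw [hy J hJ, norm_sub_sq_real, real_inner_smul_right, norm_smul, mul_pow,
      Real.norm_eq_abs, sq_abs]
    ring
  -- sum bound
  have hxsum : ∑ j, ‖x j‖^2 ≤ (n:ℝ)+1 := by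
    calc ∑ j, ‖x j‖^2 ≤ ∑ _j : Fin (n+1), (1:ℝ) :=
          Finset.sum_le_sum fun j _ => by nlinarith [norm_nonneg (x j), hx j]
      _ = (n:ℝ)+1 := by
          rw [Finset.sum_const, Finset.card_univ, Fintype.card_fin, nsmul_eq_mul]
          push_cast; ring
  have hsum_le : ∑ J ∈ T, ‖c + r⁻¹ • (c - (m:ℝ)⁻¹ • ∑ j ∈ J, x j)‖^2
      ≤ ∑ J ∈ T, (1:ℝ) := by
    rw [Finset.sum_congr rfl hnorm, Finset.sum_add_distrib, Finset.sum_sub_distrib,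
      Finset.sum_const, ← Finset.mul_sum, ← Finset.mul_sum, key1, key2, hTcard,
      Finset.sum_const, hTcard, nsmul_eq_mul, nsmul_eq_mul, mul_one, mul_zero, sub_zero]
    have e1 : t^2 * (D * S) = (N:ℝ)/((n:ℝ)+1) * S := by rw [← mul_assoc, hscalar]
    rw [e1]
    have e2 : (N:ℝ)*‖c‖^2 + (N:ℝ)/((n:ℝ)+1)*S = (N:ℝ)/((n:ℝ)+1) * (∑ j, ‖x j‖^2) := by
      rw [hSval]
      field_simp
      ring
    rw [e2]
    have e3 : (N:ℝ)/((n:ℝ)+1) * (∑ j, ‖x j‖^2) ≤ (N:ℝ)/((n:ℝ)+1) * ((n:ℝ)+1) :=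
      mul_le_mul_of_nonneg_left hxsum (by positivity)
    calc (N:ℝ)/((n:ℝ)+1) * (∑ j, ‖x j‖^2) ≤ (N:ℝ)/((n:ℝ)+1) * ((n:ℝ)+1) := e3
      _ = (N:ℝ) := by field_simp
  have hTne : T.Nonempty := by
    rw [hT]
    exact Finset.powersetCard_nonempty.mpr (by simp [Finset.card_univ]; omega)
  obtain ⟨J, hJ, hle⟩ := Finset.exists_le_of_sum_le hTne hsum_le
  exact ⟨J, hT ▸ hJ, by
    nlinarith [norm_nonneg (c + r⁻¹ • (c - (m:ℝ)⁻¹ • ∑ j ∈ J, x j)), hle]⟩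
end

section
/- For all natural numbers n ≥ 2, the maximizer index k_n ∈ {a_n, a_n+1} of ψ (i.e. ψ(k_n) = max{ψ(a_n), ψ(a_n+1)}) satisfies k_n ≤ n/2, where a_n = ⌊(n+1)/2 − √(n+1)/2⌋. -/
noncomputable def k (n : ℕ) : ℤ := if psi n (a n) < psi n (a n + 1) then a n + 1 else a n

theorem stmt17 (n : ℕ) (hn : 2 ≤ n) : (k n : ℝ) ≤ n / 2 := by
  by_cases h3 : n = 3
  · subst h3
    have hs4 : Real.sqrt 4 = 2 := by
      rw [show (4:ℝ) = 2^2 by norm_num, Real.sqrt_sq (by norm_num)]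
    have ha : a 3 = 1 := by
      unfold a
      have : ((3:ℕ):ℝ) + 1 = 4 := by norm_num
      rw [show ((3:ℕ):ℝ) + 1 = 4 by norm_num, hs4]
      norm_num
    have h3s : Real.sqrt 3 * Real.sqrt 3 = 3 := Real.mul_self_sqrt (by norm_num)
    have h3le : Real.sqrt 3 ≤ 2 := by
      nlinarith [Real.sqrt_nonneg 3]
    have hpsi : ¬ psi 3 ((a 3 : ℝ)) < psi 3 ((a 3 : ℝ) + 1) := by
      rw [ha]
      unfold psi
      have e1 : ((1:ℤ):ℝ) * (((3:ℕ):ℝ) + 1 - ((1:ℤ):ℝ)) = 3 := by push_cast; ring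
      have e2 : (((1:ℤ):ℝ) + 1) * (((3:ℕ):ℝ) + 1 - (((1:ℤ):ℝ) + 1)) = 4 := by
        push_cast; ring
      rw [e1, e2, hs4]
      push_cast
      rw [show |1 - 2 * (1:ℝ) / (3 + 1)| = 1/2 by rw [abs_of_nonneg] <;> norm_num,
        show |1 - 2 * ((1:ℝ)+1) / (3 + 1)| = 0 by norm_num]
      push_neg
      nlinarith [Real.sqrt_nonneg 3]
    have : k 3 = 1 := by
      unfold k
      rw [if_neg hpsi, ha]
    rw [this]
    norm_num
  · -- general case: (a n : ℝ) + 1 ≤ n / 2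
    have hfl : (a n : ℝ) ≤ (n + 1 : ℝ) / 2 - Real.sqrt (n + 1) / 2 := Int.floor_le _
    have hmain : (a n : ℝ) + 1 ≤ (n : ℝ) / 2 := by
      rcases Nat.even_or_odd n with ⟨l, hl⟩ | ⟨l, hl⟩
      · -- n = l + l
        have h1 : (1:ℝ) < Real.sqrt (n + 1) := by
          have : (1:ℝ) < (n:ℝ) := by exact_mod_cast lt_of_lt_of_le one_lt_two hn
          exact (Real.lt_sqrt (by norm_num)).mpr (by nlinarith)
        have h2 : (a n : ℝ) < (l : ℝ) := by
          have : (l:ℝ) + l = n := by exact_mod_cast hl.symm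
          linarith
        have h2' : a n < (l : ℤ) := by exact_mod_cast h2
        have : (a n : ℝ) ≤ (l:ℝ) - 1 := by
          have : a n ≤ (l:ℤ) - 1 := by omega
          exact_mod_cast this
        have hln : (l:ℝ) + l = n := by exact_mod_cast hl.symm
        linarith
      · -- n = 2*l + 1, n ≥ 5 since n ≠ 3 and n ≥ 2 odd
        have hl5 : 2 ≤ l := by omega
        have h2 : (2:ℝ) < Real.sqrt (n + 1) := by
          have : (4:ℝ) < (n:ℝ) := by
            have : 5 ≤ n := by omega
            exact_mod_cast lt_of_lt_of_le (by norm_num) this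
          exact (Real.lt_sqrt (by norm_num)).mpr (by nlinarith)
        have hln : (n:ℝ) = 2 * l + 1 := by exact_mod_cast hl
        have h2' : (a n : ℝ) < (l : ℝ) := by linarith
        have h2'' : a n < (l : ℤ) := by exact_mod_cast h2'
        have : (a n : ℝ) ≤ (l:ℝ) - 1 := by
          have : a n ≤ (l:ℤ) - 1 := by omega
          exact_mod_cast this
        linarith
    have hk : (k n : ℝ) ≤ (a n : ℝ) + 1 := by
      unfold k
      split <;> push_cast <;> linarith
    linarith
end
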